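/- Let p(x) = Σ_{t=0}^{T} α̂_t·L_t(x) be a polynomial of degree at most T. Then for all natural numbers i, j with |i − j| > T + 2, the integral over [−1,1] of p(x)·φ_i(x)·φ_j(x) equals 0. In other words, the matrix with entries (p·φ_i, φ_j) is banded with bandwidth at most T + 2. -/

import Mathlib

open Polynomial MeasureTheory intervalIntegral Finset

/-- The `n`-th Legendre polynomial, defined by `L_0 = 1`, `L_1 = X`, and the
three-term recurrence `(n+1) L_{n+1} = (2n+1) X L_n - n L_{n-1}`. -/
noncomputable def legendre : ℕ → Polynomial ℝ
  | 0 => 1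
  | 1 => Polynomial.X
  | (n+2) =>
      Polynomial.C ((2*(n:ℝ)+3)/((n:ℝ)+2)) * (Polynomial.X * legendre (n+1))
        - Polynomial.C (((n:ℝ)+1)/((n:ℝ)+2)) * legendre n

/-- The Legendre–Galerkin Dirichlet basis function `φ_k = L_k - L_{k+2}`. -/
noncomputable def phi (k : ℕ) : Polynomial ℝ := legendre k - legendre (k+2)


lemma legendre_rec (n : ℕ) :
    C ((n:ℝ)+2) * legendre (n+2)
      = C (2*(n:ℝ)+3) * (X * legendre (n+1)) - C ((n:ℝ)+1) * legendre n := by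
  have h2 : ((n:ℝ)+2) ≠ 0 := by positivity
  show C ((n:ℝ)+2) * (C ((2*(n:ℝ)+3)/((n:ℝ)+2)) * (X * legendre (n+1))
        - C (((n:ℝ)+1)/((n:ℝ)+2)) * legendre n) = _
  simp only [mul_sub, ← mul_assoc, ← C_mul, mul_div_cancel₀ _ h2]

lemma legendre_eval_one : ∀ n : ℕ, (legendre n).eval 1 = 1
  | 0 => by simp [legendre]
  | 1 => by simp [legendre]
  | (n+2) => by
    have h2 : ((n:ℝ)+2) ≠ 0 := by positivity
    have := congrArg (Polynomial.eval (1:ℝ)) (legendre_rec n)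
    simp only [eval_mul, eval_sub, eval_C, eval_X, legendre_eval_one (n+1), legendre_eval_one n, mul_one, one_mul] at this
    nlinarith [this]

lemma legendre_eval_neg_one : ∀ n : ℕ, (legendre n).eval (-1) = (-1)^n
  | 0 => by simp [legendre]
  | 1 => by simp [legendre]
  | (n+2) => by
    have h2 : ((n:ℝ)+2) ≠ 0 := by positivity
    have := congrArg (Polynomial.eval (-1:ℝ)) (legendre_rec n)
    simp only [eval_mul, eval_sub, eval_C, eval_X, legendre_eval_neg_one (n+1), legendre_eval_neg_one n] at this
    have h3 : ((n:ℝ)+2) * (legendre (n+2)).eval (-1) = ((n:ℝ)+2) * (-1)^(n+2) := by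
      rw [this]; ring
    exact mul_left_cancel₀ h2 h3

lemma legendre_deriv : ∀ n : ℕ,
    derivative (legendre (n+1)) = X * derivative (legendre n) + C ((n:ℝ)+1) * legendre n
    ∧ X * derivative (legendre (n+1)) = C ((n:ℝ)+1) * legendre (n+1) + derivative (legendre n)
  | 0 => by constructor <;> simp [legendre]
  | (n+1) => by
    obtain ⟨ha, hb⟩ := legendre_deriv n
    have hC : (C ((n:ℝ)+2)) ≠ 0 := by
      rw [Ne, Polynomial.C_eq_zero]; positivity
    have hd := congrArg derivative (legendre_rec n)
    simp only [derivative_mul, derivative_C, derivative_X, zero_mul, zero_add, one_mul,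
      derivative_sub] at hd
    have hDn : derivative (legendre n)
        = X * derivative (legendre (n+1)) - C ((n:ℝ)+1) * legendre (n+1) := by
      linear_combination -hb
    have ha' : derivative (legendre (n+1+1))
        = X * derivative (legendre (n+1)) + C (((n+1:ℕ):ℝ)+1) * legendre (n+1) := by
      push_cast
      apply mul_left_cancel₀ hC
      simp only [Nat.cast_add, Nat.cast_one, map_add, map_mul, map_ofNat, map_one] at hd hDn ⊢
      linear_combination hd - (C (n:ℝ) + 1) * hDn
    refine ⟨ha', ?_⟩
    have hrec := legendre_rec n
    push_cast
    apply mul_left_cancel₀ hC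
    simp only [Nat.cast_add, Nat.cast_one, map_add, map_mul, map_ofNat, map_one] at hd hDn hrec ha' ha hb ⊢
    linear_combination (C (n:ℝ) + 2) * X * ha' - (C (n:ℝ) + 2) * hrec
      + (C (n:ℝ) + 2) * X * hb - (C (n:ℝ) + 2) * ha

lemma legendre_deriv_sub (n : ℕ) :
    derivative (legendre (n+2)) - derivative (legendre n)
      = C (2*(n:ℝ)+3) * legendre (n+1) := by
  have h1 := (legendre_deriv (n+1)).1
  have h2 := (legendre_deriv n).2
  simp only [Nat.cast_add, Nat.cast_one, map_add, map_mul, map_ofNat, map_one] at h1 h2 ⊢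
  linear_combination h1 + h2

lemma poly_intInt (p : Polynomial ℝ) :
    IntervalIntegrable (fun x => p.eval x) volume (-1:ℝ) 1 :=
  p.continuous.intervalIntegrable _ _

lemma legendre_integral_eq (q : Polynomial ℝ) (n : ℕ) :
    (2*(n:ℝ)+3) * ∫ x in (-1:ℝ)..1, q.eval x * (legendre (n+1)).eval x
    = (q.eval 1 * ((legendre (n+2)).eval 1 - (legendre n).eval 1)
       - q.eval (-1) * ((legendre (n+2)).eval (-1) - (legendre n).eval (-1)))
      - ∫ x in (-1:ℝ)..1,
          (derivative q).eval x * ((legendre (n+2)).eval x - (legendre n).eval x) := by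
  set r : Polynomial ℝ := legendre (n+2) - legendre n with hr
  have hDr : derivative r = C (2*(n:ℝ)+3) * legendre (n+1) := by
    rw [hr, derivative_sub, legendre_deriv_sub]
  have h1 : ∀ x : ℝ, (2*(n:ℝ)+3) * (q.eval x * (legendre (n+1)).eval x)
      = (derivative (q*r)).eval x - (derivative q).eval x * r.eval x := by
    intro x
    rw [derivative_mul, hDr]
    simp only [eval_add, eval_mul, eval_C]
    ring
  have hftc : (∫ x in (-1:ℝ)..1, (derivative (q*r)).eval x)
      = (q*r).eval 1 - (q*r).eval (-1) := by
    exact intervalIntegral.integral_eq_sub_of_hasDerivAt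
      (fun x _ => (q*r).hasDerivAt x) (poly_intInt _)
  have h2 : (∫ x in (-1:ℝ)..1, q.eval x * (legendre (n+1)).eval x) * (2*(n:ℝ)+3)
      = (∫ x in (-1:ℝ)..1, (derivative (q*r)).eval x)
        - ∫ x in (-1:ℝ)..1, (derivative q).eval x * r.eval x := by
    rw [← intervalIntegral.integral_mul_const, ← intervalIntegral.integral_sub
      (f := fun x => (derivative (q*r)).eval x) (g := fun x => (derivative q).eval x * r.eval x)
      (poly_intInt _) (((derivative q).continuous.mul r.continuous).intervalIntegrable _ _)]
    congr 1; funext x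
    rw [mul_comm, h1 x]
  have h3 : ∀ x : ℝ, r.eval x = (legendre (n+2)).eval x - (legendre n).eval x := by
    intro x; rw [hr, eval_sub]
  calc (2*(n:ℝ)+3) * ∫ x in (-1:ℝ)..1, q.eval x * (legendre (n+1)).eval x
      = (∫ x in (-1:ℝ)..1, q.eval x * (legendre (n+1)).eval x) * (2*(n:ℝ)+3) := by ring
    _ = _ := by
        rw [h2, hftc]
        simp only [eval_mul, h3, hr, eval_sub]

lemma legendre_step (q : Polynomial ℝ) (m : ℕ)
    (h2 : (∫ x in (-1:ℝ)..1, (derivative q).eval x * (legendre (m+2)).eval x) = 0)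
    (h0 : (∫ x in (-1:ℝ)..1, (derivative q).eval x * (legendre m).eval x) = 0) :
    (∫ x in (-1:ℝ)..1, q.eval x * (legendre (m+1)).eval x) = 0 := by
  have key := legendre_integral_eq q m
  have hbd : q.eval 1 * ((legendre (m+2)).eval 1 - (legendre m).eval 1)
      - q.eval (-1) * ((legendre (m+2)).eval (-1) - (legendre m).eval (-1)) = 0 := by
    simp [legendre_eval_one, legendre_eval_neg_one, pow_succ]
  have hint : (∫ x in (-1:ℝ)..1,
      (derivative q).eval x * ((legendre (m+2)).eval x - (legendre m).eval x)) = 0 := by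
    have : (∫ x in (-1:ℝ)..1,
        (derivative q).eval x * ((legendre (m+2)).eval x - (legendre m).eval x))
        = (∫ x in (-1:ℝ)..1, (derivative q).eval x * (legendre (m+2)).eval x)
          - ∫ x in (-1:ℝ)..1, (derivative q).eval x * (legendre m).eval x := by
      rw [← intervalIntegral.integral_sub
        (f := fun x => (derivative q).eval x * (legendre (m+2)).eval x)
        (g := fun x => (derivative q).eval x * (legendre m).eval x)
        (((derivative q).continuous.mul (legendre (m+2)).continuous).intervalIntegrable _ _)
        (((derivative q).continuous.mul (legendre m).continuous).intervalIntegrable _ _)]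
      congr 1; funext x; ring
    rw [this, h2, h0, sub_zero]
  rw [hbd, hint, sub_zero] at key
  have h23 : (2*(m:ℝ)+3) ≠ 0 := by positivity
  exact (mul_eq_zero.mp key).resolve_left h23

lemma legendre_orth (k : ℕ) : ∀ q : Polynomial ℝ, q.natDegree ≤ k → ∀ n, k < n →
    (∫ x in (-1:ℝ)..1, q.eval x * (legendre n).eval x) = 0 := by
  induction k with
  | zero =>
    intro q hq n hn
    obtain ⟨m, rfl⟩ : ∃ m, n = m + 1 := ⟨n - 1, by omega⟩
    have hD : derivative q = 0 := by
      rw [Polynomial.eq_C_of_natDegree_le_zero hq]; simp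
    apply legendre_step <;> simp [hD]
  | succ k ih =>
    intro q hq n hn
    obtain ⟨m, rfl⟩ : ∃ m, n = m + 1 := ⟨n - 1, by omega⟩
    have hD : (derivative q).natDegree ≤ k := by
      have := Polynomial.natDegree_derivative_le q
      omega
    exact legendre_step q m (ih _ hD _ (by omega)) (ih _ hD _ (by omega))


lemma legendre_natDegree_le : ∀ n : ℕ, (legendre n).natDegree ≤ n
  | 0 => by simp [legendre]
  | 1 => by simp [legendre]
  | (n+2) => by
    show ((C ((2*(n:ℝ)+3)/((n:ℝ)+2)) * (X * legendre (n+1)))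
        - C (((n:ℝ)+1)/((n:ℝ)+2)) * legendre n).natDegree ≤ n+2
    refine le_trans (natDegree_sub_le _ _) (max_le ?_ ?_)
    · refine le_trans natDegree_mul_le ?_
      have h1 : (X * legendre (n+1)).natDegree ≤ 1 + (n+1) :=
        le_trans natDegree_mul_le (by
          have := legendre_natDegree_le (n+1)
          simp only [natDegree_X]; omega)
      simp only [natDegree_C]; omega
    · refine le_trans natDegree_mul_le ?_
      have := legendre_natDegree_le n
      simp only [natDegree_C]; omega

lemma phi_natDegree_le (k : ℕ) : (phi k).natDegree ≤ k + 2 := by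
  refine le_trans (natDegree_sub_le _ _) (max_le ?_ (legendre_natDegree_le _))
  exact le_trans (legendre_natDegree_le k) (by omega)

lemma aux_banded (P : Polynomial ℝ) (T i j : ℕ) (hP : P.natDegree ≤ T)
    (hij : T + i + 2 < j) :
    (∫ x in (-1:ℝ)..1, P.eval x * (phi i).eval x * (phi j).eval x) = 0 := by
  have hq : (P * phi i).natDegree ≤ T + i + 2 :=
    le_trans natDegree_mul_le (by have := phi_natDegree_le i; omega)
  have h1 := legendre_orth (T+i+2) (P * phi i) hq j hij
  have h2 := legendre_orth (T+i+2) (P * phi i) hq (j+2) (by omega)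
  have hsplit : (∫ x in (-1:ℝ)..1, P.eval x * (phi i).eval x * (phi j).eval x)
      = (∫ x in (-1:ℝ)..1, (P * phi i).eval x * (legendre j).eval x)
        - ∫ x in (-1:ℝ)..1, (P * phi i).eval x * (legendre (j+2)).eval x := by
    rw [← intervalIntegral.integral_sub
      (f := fun x => (P * phi i).eval x * (legendre j).eval x)
      (g := fun x => (P * phi i).eval x * (legendre (j+2)).eval x)
      (((P * phi i).continuous.mul (legendre j).continuous).intervalIntegrable _ _)
      (((P * phi i).continuous.mul (legendre (j+2)).continuous).intervalIntegrable _ _)]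
    congr 1; funext x
    simp only [eval_mul, phi, eval_sub]
    ring
  rw [hsplit, h1, h2, sub_zero]


theorem mass_banded (T : ℕ) (alphaHat : ℕ → ℝ) (i j : ℕ)
    (h : ((T:ℤ) + 2) < |(i:ℤ) - (j:ℤ)|) :
    (∫ x in (-1:ℝ)..1,
      (∑ t ∈ Finset.range (T+1), alphaHat t * (legendre t).eval x) *
        (phi i).eval x * (phi j).eval x) = 0 := by
  set P : Polynomial ℝ := ∑ t ∈ Finset.range (T+1), C (alphaHat t) * legendre t with hPdef
  have hP : P.natDegree ≤ T := by
    apply Polynomial.natDegree_sum_le_of_forall_le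
    intro t ht
    refine le_trans natDegree_mul_le ?_
    have := legendre_natDegree_le t
    have ht' := Finset.mem_range.mp ht
    simp only [natDegree_C]; omega
  have hPeval : ∀ x : ℝ, P.eval x = ∑ t ∈ Finset.range (T+1), alphaHat t * (legendre t).eval x := by
    intro x; rw [hPdef, Polynomial.eval_finset_sum]; simp
  have hcase : T + i + 2 < j ∨ T + j + 2 < i := by
    rcases abs_cases ((i:ℤ) - (j:ℤ)) with ⟨he, _⟩ | ⟨he, _⟩ <;> omega
  rcases hcase with hc | hc
  · have := aux_banded P T i j hP hc
    rw [← this]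
    congr 1; funext x; rw [hPeval x]
  · have := aux_banded P T j i hP hc
    rw [← this]
    congr 1; funext x; rw [hPeval x]; ring
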